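/- If each port alphabet has at most one event, then for FSMs N and M, N ⊑_s M if and only if the Parikh image of L(N) is a subset of the Parikh image of L(M). -/
import Mathlib


def proj {Act P : Type} [DecidableEq P] (port : Act → P) (p : P) (σ : List Act) : List Act :=
  σ.filter (fun a => port a = p)

/-- The Parikh image of a trace: the number of occurrences of each event. -/
def parikh {Act : Type} [DecidableEq Act] (σ : List Act) : Act → ℕ :=
  fun a => σ.count a

lemma proj_port_eq_replicate {Act P : Type} [DecidableEq Act] [DecidableEq P]
    (port : Act → P) (hsingle : ∀ a b : Act, port a = port b → a = b)
    (a : Act) (σ : List Act) :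
    proj port (port a) σ = List.replicate (σ.count a) a := by
  induction σ with
  | nil => simp [proj]
  | cons b l ih =>
    by_cases h : port b = port a
    · have hb : b = a := hsingle b a h
      subst hb
      simp [proj, List.filter_cons, h, List.count_cons, List.replicate_succ] at *
      exact ih
    · have hb : b ≠ a := fun e => h (e ▸ rfl)
      simp [proj, List.filter_cons, h, List.count_cons, hb] at *
      exact ih

lemma proj_eq_of_counts {Act P : Type} [DecidableEq Act] [DecidableEq P]
    (port : Act → P) (hsingle : ∀ a b : Act, port a = port b → a = b)
    (σ σ' : List Act) (hc : ∀ a, σ.count a = σ'.count a) (p : P) :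
    proj port p σ = proj port p σ' := by
  by_cases h : ∃ a, a ∈ σ ∧ port a = p
  · obtain ⟨a, _, hp⟩ := h
    subst hp
    rw [proj_port_eq_replicate port hsingle, proj_port_eq_replicate port hsingle, hc a]
  · push_neg at h
    have h1 : proj port p σ = [] := by
      simp only [proj, List.filter_eq_nil_iff]
      intro a ha
      simpa using h a ha
    have h2 : proj port p σ' = [] := by
      simp only [proj, List.filter_eq_nil_iff]
      intro a ha
      have : a ∈ σ := by
        rw [← List.count_pos_iff] at ha ⊢
        rw [hc a]; exact ha
      simpa using h a this
    rw [h1, h2]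

/-- if each port's alphabet has at most one event then `N ⊑_s M`
iff the Parikh image of `L(N)` is contained in the Parikh image of `L(M)`. -/
theorem strong_conf_iff_parikh_subset {Act P : Type} [DecidableEq Act] [DecidableEq P]
    (port : Act → P) (hsingle : ∀ a b : Act, port a = port b → a = b)
    (LN LM : Set (List Act)) :
    (∀ σ ∈ LN, ∃ σ' ∈ LM, ∀ p : P, proj port p σ = proj port p σ') ↔
      parikh '' LN ⊆ parikh '' LM := by
  constructor
  · rintro h f ⟨σ, hσ, rfl⟩
    obtain ⟨σ', hσ', hp⟩ := h σ hσ
    refine ⟨σ', hσ', ?_⟩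
    funext a
    have := hp (port a)
    rw [proj_port_eq_replicate port hsingle, proj_port_eq_replicate port hsingle] at this
    have := congrArg List.length this
    simpa [parikh] using this.symm
  · intro h σ hσ
    obtain ⟨σ', hσ', he⟩ := h ⟨σ, hσ, rfl⟩
    refine ⟨σ', hσ', fun p => ?_⟩
    exact proj_eq_of_counts port hsingle σ σ'
      (fun a => by have := congrFun he a; simpa [parikh] using this.symm) p
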